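/- Let A, B be symmetric positive definite n×n real matrices and let L be the unique symmetric positive definite matrix with L²AL² = B. Set D := LAL. Then D = L⁻¹BL⁻¹, D is symmetric positive definite, and for all q,p ∈ ℝⁿ the identity ½⟨Bp,p⟩ − ½⟨Aq,q⟩ = ⟨Dx,y⟩ holds, where x = (Lp + L⁻¹q)/√2 and y = (Lp − L⁻¹q)/√2. That is, the linear change of variables (q,p) ↦ (x,y) transforms the quadratic Hamiltonian H(q,p) = ½⟨Bp,p⟩ − ½⟨Aq,q⟩ into G(x,y) = ⟨Dx,y⟩. -/

import Mathlib

open Matrix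

/-- with `L` the unique symmetric positive definite matrix such that
`L²AL² = B`, the matrix `D := LAL` satisfies `D = L⁻¹BL⁻¹`, is symmetric positive
definite, and the change of variables `x = (Lp + L⁻¹q)/√2`, `y = (Lp − L⁻¹q)/√2`
transforms `½⟨Bp,p⟩ − ½⟨Aq,q⟩` into `⟨Dx,y⟩`. -/
theorem quadratic_hamiltonian_normal_form
    (n : ℕ) (A B L : Matrix (Fin n) (Fin n) ℝ)
    (hA : A.PosDef) (hB : B.PosDef) (hL : L.PosDef)
    (hLAL : L * L * A * (L * L) = B) :
    let D := L * A * L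
    D = L⁻¹ * B * L⁻¹ ∧ D.PosDef ∧
    ∀ q p : Fin n → ℝ,
      (1 / 2) * (B.mulVec p ⬝ᵥ p) - (1 / 2) * (A.mulVec q ⬝ᵥ q) =
        D.mulVec ((Real.sqrt 2)⁻¹ • (L.mulVec p + L⁻¹.mulVec q)) ⬝ᵥ
          ((Real.sqrt 2)⁻¹ • (L.mulVec p - L⁻¹.mulVec q)) := by
  intro D
  have hLinv : Invertible L := hL.isUnit.invertible
  have hLL : L⁻¹ * L = 1 := inv_mul_of_invertible L
  have hLL' : L * L⁻¹ = 1 := mul_inv_of_invertible L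
  have hLsymm : Lᵀ = L := hL.isHermitian.eq
  have hAsymm : Aᵀ = A := hA.isHermitian.eq
  have hLinvsymm : (L⁻¹)ᵀ = L⁻¹ := by rw [Matrix.transpose_nonsing_inv, hLsymm]
  have hDeq : D = L⁻¹ * B * L⁻¹ := by
    rw [← hLAL]
    have h : L⁻¹ * (L * L * A * (L * L)) * L⁻¹ = (L⁻¹ * L) * (L * A * L) * (L * L⁻¹) := by
      simp only [Matrix.mul_assoc]
    show L * A * L = _
    rw [h, hLL, hLL', Matrix.one_mul, Matrix.mul_one]
  have hDsymm : Dᵀ = D := by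
    show (L * A * L)ᵀ = L * A * L
    rw [Matrix.transpose_mul, Matrix.transpose_mul, hLsymm, hAsymm, Matrix.mul_assoc]
  -- symmetric swap lemma
  have hswap : ∀ (M : Matrix (Fin n) (Fin n) ℝ), Mᵀ = M →
      ∀ x y : Fin n → ℝ, M.mulVec x ⬝ᵥ y = x ⬝ᵥ M.mulVec y := by
    intro M hM x y
    rw [Matrix.dotProduct_mulVec, ← Matrix.mulVec_transpose, hM]
  have hDpos : D.PosDef := by
    refine Matrix.PosDef.of_dotProduct_mulVec_pos hDsymm (fun x hx => ?_)
    have hLx : L.mulVec x ≠ 0 := by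
      intro h
      apply hx
      have := congrArg (L⁻¹.mulVec) h
      rwa [Matrix.mulVec_mulVec, hLL, Matrix.one_mulVec, Matrix.mulVec_zero] at this
    have hpos := hA.dotProduct_mulVec_pos hLx
    simp only [RCLike.re_to_real, star_trivial] at hpos ⊢
    show 0 < x ⬝ᵥ (L * A * L).mulVec x
    have h1 : (L * A * L).mulVec x = L.mulVec ((A * L).mulVec x) := by
      rw [Matrix.mulVec_mulVec, Matrix.mul_assoc]
    rw [h1, ← hswap L hLsymm, ← Matrix.mulVec_mulVec]
    exact hpos
  refine ⟨hDeq, hDpos, fun q p => ?_⟩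
  set u := L.mulVec p with hu
  set v := L⁻¹.mulVec q with hv
  have hDu : D.mulVec u ⬝ᵥ u = B.mulVec p ⬝ᵥ p := by
    rw [hu, Matrix.mulVec_mulVec, ← hswap L hLsymm, Matrix.mulVec_mulVec]
    have : L * (D * L) = B := by
      rw [← hLAL]; show L * (L * A * L * L) = _; simp only [Matrix.mul_assoc]
    rw [this]
  have hDv : D.mulVec v ⬝ᵥ v = A.mulVec q ⬝ᵥ q := by
    rw [hv, Matrix.mulVec_mulVec, ← hswap L⁻¹ hLinvsymm, Matrix.mulVec_mulVec]
    have h : L⁻¹ * (D * L⁻¹) = A := by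
      show L⁻¹ * (L * A * L * L⁻¹) = A
      have h2 : L⁻¹ * (L * A * L * L⁻¹) = (L⁻¹ * L) * (A * (L * L⁻¹)) := by
        simp only [Matrix.mul_assoc]
      rw [h2, hLL, hLL', Matrix.one_mul, Matrix.mul_one]
    rw [h]
  have hcross : D.mulVec u ⬝ᵥ v = D.mulVec v ⬝ᵥ u := by
    rw [hswap D hDsymm, dotProduct_comm]
  have h2 : ((Real.sqrt 2)⁻¹ : ℝ) * (Real.sqrt 2)⁻¹ = 1 / 2 := by
    rw [← mul_inv, ← Real.sqrt_mul_self (by norm_num : (0:ℝ) ≤ 2)]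
    norm_num
  have key : D.mulVec (u + v) ⬝ᵥ (u - v) = B.mulVec p ⬝ᵥ p - A.mulVec q ⬝ᵥ q := by
    rw [Matrix.mulVec_add, add_dotProduct, dotProduct_sub,
      dotProduct_sub, hDu, hDv, hcross]
    ring
  rw [Matrix.mulVec_smul, smul_dotProduct, dotProduct_smul,
    smul_smul, h2, key, smul_eq_mul]
  ring
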